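/- Let n ≥ 2 and consider the binary Hamming graph H(2n,2) with vertices identified with pairs (β,γ) of vectors β,γ ∈ F_2^n, and let C = {(β,β) : β ∈ F_2^n, wt(β) even}. Then C is Aut(C)-neighbour transitive: for any two neighbours ν1, ν2 ∈ Γ1(C) there exists an automorphism f of H(2n,2) (a Hamming-distance-preserving bijection of F_2^{2n}) with f(C) = C and f(ν1) = ν2. -/

import Mathlib

open Set

/-- Vectors in `F_2^n`. -/
abbrev V (n : ℕ) := Fin n → ZMod 2

/-- The Hamming distance on `H(2n,2)`, with vertices identified with pairs
`(β,γ)` of vectors `β, γ ∈ F_2^n`. -/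
def pd {n : ℕ} (u v : V n × V n) : ℕ :=
  hammingDist u.1 v.1 + hammingDist u.2 v.2

/-- The set of neighbours `Γ₁(S)` of a code `S` in `H(2n,2)`. -/
def NbrsP {n : ℕ} (S : Set (V n × V n)) : Set (V n × V n) :=
  {ν | ν ∉ S ∧ ∃ α ∈ S, pd ν α = 1}

/-- The code `S` has minimum distance `δ`. -/
def IsMinDistP {n : ℕ} (S : Set (V n × V n)) (δ : ℕ) : Prop :=
  (∀ a ∈ S, ∀ b ∈ S, a ≠ b → δ ≤ pd a b) ∧
  ∃ a ∈ S, ∃ b ∈ S, a ≠ b ∧ pd a b = δ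

/-- The repetition-style code `U = {(β,β) : β ∈ F_2^n}`. -/
def Ucode (n : ℕ) : Set (V n × V n) := {p | p.1 = p.2}

/-- The code `C = {(β,β) : β ∈ F_2^n, wt(β) even}`. -/
def Ccode (n : ℕ) : Set (V n × V n) := {p | p.1 = p.2 ∧ Even (hammingNorm p.1)}

/-- parity of a vector -/
def epar {n : ℕ} (x : V n) : ZMod 2 := ∑ i, x i

lemma norm_cast_eq_epar {n : ℕ} (x : V n) : ((hammingNorm x : ℕ) : ZMod 2) = epar x := by
  unfold hammingNorm epar
  rw [Finset.card_filter]
  push_cast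
  refine Finset.sum_congr rfl (fun i _ => ?_)
  have h : ∀ a : ZMod 2, (if a ≠ 0 then (1 : ZMod 2) else 0) = a := by decide
  exact h (x i)

lemma even_norm_iff {n : ℕ} (x : V n) : Even (hammingNorm x) ↔ epar x = 0 := by
  rw [← norm_cast_eq_epar, ZMod.natCast_eq_zero_iff]
  exact even_iff_two_dvd

lemma hd_sum {n : ℕ} (x y : V n) :
    hammingDist x y = ∑ i, if x i ≠ y i then 1 else 0 := by
  unfold hammingDist
  rw [Finset.card_filter]

lemma pd_sum {n : ℕ} (u w : V n × V n) :
    pd u w = ∑ i, ((if u.1 i ≠ w.1 i then (1:ℕ) else 0) + (if u.2 i ≠ w.2 i then 1 else 0)) := by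
  unfold pd
  rw [hd_sum, hd_sum, ← Finset.sum_add_distrib]

/-- standard basis vector -/
def ebv {n : ℕ} (i : Fin n) : V n := fun j => if j = i then 1 else 0

lemma epar_add {n : ℕ} (x y : V n) : epar (x + y) = epar x + epar y := by
  unfold epar
  rw [← Finset.sum_add_distrib]
  rfl

lemma hdist_one {n : ℕ} (x y : V n) (h : hammingDist x y = 1) :
    ∃ i, x = y + ebv i := by
  unfold hammingDist at h
  rw [Finset.card_eq_one] at h
  obtain ⟨i, hi⟩ := h
  refine ⟨i, funext fun j => ?_⟩
  have hmem : ∀ k : Fin n, (k ∈ ({i} : Finset (Fin n))) ↔ x k ≠ y k := by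
    intro k
    rw [← hi]
    simp
  by_cases hj : j = i
  · subst hj
    have h1 : x j ≠ y j := (hmem j).1 (Finset.mem_singleton_self j)
    have h2 : ∀ a b : ZMod 2, a ≠ b → a = b + 1 := by decide
    simpa [ebv] using h2 _ _ h1
  · have h1 : ¬ (x j ≠ y j) := fun hc => hj (Finset.mem_singleton.1 ((hmem j).2 hc))
    push_neg at h1
    simp [ebv, hj, h1]

/-- every neighbour of C has a canonical form -/
lemma nbr_char {n : ℕ} (ν : V n × V n) (h : ν ∈ NbrsP (Ccode n)) :
    ∃ (i : Fin n) (α : V n), epar α = 0 ∧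
      (ν = (α + ebv i, α) ∨ ν = (α, α + ebv i)) := by
  obtain ⟨-, β, ⟨hβ, hev⟩, hpd⟩ := h
  unfold pd at hpd
  rw [even_norm_iff] at hev
  rw [← hβ] at hpd
  rcases Nat.add_eq_one_iff.1 hpd with ⟨h1, h2⟩ | ⟨h1, h2⟩
  · rw [hammingDist_eq_zero] at h1
    obtain ⟨i, hi⟩ := hdist_one ν.2 β.1 h2
    exact ⟨i, β.1, hev, Or.inr (Prod.ext h1 hi)⟩
  · rw [hammingDist_eq_zero] at h2
    obtain ⟨i, hi⟩ := hdist_one ν.1 β.1 h1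
    exact ⟨i, β.1, hev, Or.inl (Prod.ext hi h2)⟩

def Good (n : ℕ) (f : (V n × V n) ≃ (V n × V n)) : Prop :=
  (∀ u v, pd (f u) (f v) = pd u v) ∧ f '' Ccode n = Ccode n

lemma good_trans {n : ℕ} {f g : (V n × V n) ≃ (V n × V n)}
    (hf : Good n f) (hg : Good n g) : Good n (f.trans g) := by
  refine ⟨fun u v => by simp [Equiv.trans_apply, hg.1, hf.1], ?_⟩
  have : (f.trans g) '' Ccode n = g '' (f '' Ccode n) := by
    rw [Equiv.coe_trans, Set.image_comp]
  rw [this, hf.2, hg.2]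

lemma mk_good {n : ℕ} (g : (V n × V n) → (V n × V n)) (hinv : Function.Involutive g)
    (hpd : ∀ u v, pd (g u) (g v) = pd u v) (hC : ∀ x ∈ Ccode n, g x ∈ Ccode n) :
    Good n (hinv.toPerm g) := by
  refine ⟨by simpa using hpd, ?_⟩
  apply Set.Subset.antisymm
  · rintro y ⟨x, hx, rfl⟩
    simpa using hC x hx
  · intro x hx
    exact ⟨g x, hC x hx, by simpa using hinv x⟩

/-- diagonal translation -/
def Tfun {n : ℕ} (α : V n) : (V n × V n) → (V n × V n) := fun p => (p.1 + α, p.2 + α)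

lemma Tinv {n : ℕ} (α : V n) : Function.Involutive (Tfun α) := by
  intro p
  have h : ∀ x : V n, x + α + α = x := by
    intro x; funext j
    have : ∀ a b : ZMod 2, a + b + b = a := by decide
    exact this _ _
  simp [Tfun, h]

lemma Tgood {n : ℕ} (α : V n) (hα : epar α = 0) : Good n ((Tinv α).toPerm (Tfun α)) := by
  apply mk_good
  · intro u v
    rw [pd_sum, pd_sum]
    refine Finset.sum_congr rfl (fun i _ => ?_)
    have h : ∀ a b c : ZMod 2, (a + c ≠ b + c) ↔ a ≠ b := by decide
    simp only [Tfun, Pi.add_apply, h]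
  · rintro ⟨x1, x2⟩ ⟨heq, hev⟩
    refine ⟨by simp [Tfun] at heq ⊢; rw [heq], ?_⟩
    rw [even_norm_iff] at hev ⊢
    simp only [Tfun]
    rw [epar_add, hev, hα, add_zero]

/-- swap the two halves at a single coordinate -/
def Sfun {n : ℕ} (k : Fin n) : (V n × V n) → (V n × V n) := fun p =>
  (fun j => if j = k then p.2 j else p.1 j, fun j => if j = k then p.1 j else p.2 j)

lemma Sinv {n : ℕ} (k : Fin n) : Function.Involutive (Sfun k) := by
  intro p
  refine Prod.ext (funext fun j => ?_) (funext fun j => ?_) <;>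
    by_cases hj : j = k <;> simp [Sfun, hj]

lemma Sgood {n : ℕ} (k : Fin n) : Good n ((Sinv k).toPerm (Sfun k)) := by
  apply mk_good
  · intro u v
    rw [pd_sum, pd_sum]
    refine Finset.sum_congr rfl (fun i _ => ?_)
    by_cases hi : i = k <;> simp [Sfun, hi, add_comm]
  · rintro ⟨x1, x2⟩ ⟨heq, hev⟩
    simp only [Ccode, Sfun, Set.mem_setOf_eq] at heq hev ⊢
    subst heq
    constructor
    · funext j; by_cases hj : j = k <;> simp [hj]
    · have h : (fun j => if j = k then x1 j else x1 j) = x1 := by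
        funext j; by_cases hj : j = k <;> simp [hj]
      rw [h]; exact hev

/-- simultaneous transposition of positions in both halves -/
def Pfun {n : ℕ} (a b : Fin n) : (V n × V n) → (V n × V n) := fun p =>
  (p.1 ∘ (Equiv.swap a b), p.2 ∘ (Equiv.swap a b))

lemma Pinv {n : ℕ} (a b : Fin n) : Function.Involutive (Pfun a b) := by
  intro p
  refine Prod.ext (funext fun j => ?_) (funext fun j => ?_) <;>
    simp [Pfun, Equiv.swap_apply_self]

lemma hd_comp_swap {n : ℕ} (x y : V n) (a b : Fin n) :
    hammingDist (x ∘ Equiv.swap a b) (y ∘ Equiv.swap a b) = hammingDist x y := by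
  rw [hd_sum, hd_sum]
  exact Equiv.sum_comp (Equiv.swap a b) (fun i => if x i ≠ y i then 1 else 0)

lemma epar_comp_swap {n : ℕ} (x : V n) (a b : Fin n) :
    epar (x ∘ Equiv.swap a b) = epar x := by
  unfold epar
  exact Equiv.sum_comp (Equiv.swap a b) x

lemma Pgood {n : ℕ} (a b : Fin n) : Good n ((Pinv a b).toPerm (Pfun a b)) := by
  apply mk_good
  · intro u v
    unfold pd Pfun
    rw [hd_comp_swap, hd_comp_swap]
  · rintro ⟨x1, x2⟩ ⟨heq, hev⟩
    simp only [Ccode, Pfun, Set.mem_setOf_eq] at heq hev ⊢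
    subst heq
    refine ⟨rfl, ?_⟩
    rw [even_norm_iff] at hev ⊢
    rw [epar_comp_swap]
    exact hev

lemma good_symm {n : ℕ} {f : (V n × V n) ≃ (V n × V n)} (hf : Good n f) : Good n f.symm := by
  constructor
  · intro u v
    have h := hf.1 (f.symm u) (f.symm v)
    simpa using h.symm
  · conv_lhs => rw [← hf.2]
    exact Equiv.symm_image_image f (Ccode n)

lemma ebv_comp_swap {n : ℕ} (i i0 : Fin n) :
    (ebv i) ∘ (Equiv.swap i i0) = ebv i0 := by
  funext j
  simp only [Function.comp_apply, ebv]
  by_cases hj : j = i0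
  · subst hj; simp [Equiv.swap_apply_right]
  · have h : Equiv.swap i i0 j ≠ i := by
      intro hc
      apply hj
      have := congrArg (Equiv.swap i i0) hc
      rwa [Equiv.swap_apply_self, Equiv.swap_apply_left] at this
    simp [hj, h]

lemma zero_comp_swap {n : ℕ} (i i0 : Fin n) :
    ((0 : V n) ∘ (Equiv.swap i i0)) = (0 : V n) := rfl

lemma T_left {n : ℕ} (α : V n) (i : Fin n) : Tfun α (α + ebv i, α) = (ebv i, 0) := by
  have h1 : ∀ a b : ZMod 2, a + b + a = b := by decide
  have h2 : ∀ a : ZMod 2, a + a = 0 := by decide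
  exact Prod.ext (funext fun j => h1 _ _) (funext fun j => h2 _)

lemma T_right {n : ℕ} (α : V n) (i : Fin n) : Tfun α (α, α + ebv i) = (0, ebv i) := by
  have h1 : ∀ a b : ZMod 2, a + b + a = b := by decide
  have h2 : ∀ a : ZMod 2, a + a = 0 := by decide
  exact Prod.ext (funext fun j => h2 _) (funext fun j => h1 _ _)

lemma S_base {n : ℕ} (k : Fin n) : Sfun k (0, ebv k) = (ebv k, 0) := by
  refine Prod.ext (funext fun j => ?_) (funext fun j => ?_) <;>
    by_cases hj : j = k <;> simp [Sfun, ebv, hj]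

lemma to_base {n : ℕ} (hn : 2 ≤ n) (ν : V n × V n) (h : ν ∈ NbrsP (Ccode n)) :
    ∃ f : (V n × V n) ≃ (V n × V n), Good n f ∧
      f ν = (ebv (⟨0, by omega⟩ : Fin n), 0) := by
  obtain ⟨i, α, hα, hcase⟩ := nbr_char ν h
  set i0 : Fin n := ⟨0, by omega⟩
  rcases hcase with rfl | rfl
  · refine ⟨((Tinv α).toPerm (Tfun α)).trans ((Pinv i i0).toPerm (Pfun i i0)),
      good_trans (Tgood α hα) (Pgood i i0), ?_⟩
    simp only [Equiv.trans_apply, Function.Involutive.coe_toPerm]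
    rw [T_left]
    show Pfun i i0 (ebv i, 0) = _
    unfold Pfun
    rw [show ((ebv i, (0:V n)).1 : V n) = ebv i from rfl]
    exact Prod.ext (ebv_comp_swap i i0) (zero_comp_swap i i0)
  · refine ⟨((Tinv α).toPerm (Tfun α)).trans
      (((Pinv i i0).toPerm (Pfun i i0)).trans ((Sinv i0).toPerm (Sfun i0))),
      good_trans (Tgood α hα) (good_trans (Pgood i i0) (Sgood i0)), ?_⟩
    simp only [Equiv.trans_apply, Function.Involutive.coe_toPerm]
    rw [T_right]
    have hp : Pfun i i0 ((0:V n), ebv i) = ((0:V n), ebv i0) := by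
      unfold Pfun
      exact Prod.ext (zero_comp_swap i i0) (ebv_comp_swap i i0)
    rw [hp, S_base]


/-- `C` is `Aut(C)`-neighbour transitive: any two neighbours of
`C` are related by a distance-preserving bijection fixing `C` setwise. -/
theorem stmt_17 (n : ℕ) (hn : 2 ≤ n) :
    ∀ ν1 ∈ NbrsP (Ccode n), ∀ ν2 ∈ NbrsP (Ccode n),
      ∃ f : (V n × V n) ≃ (V n × V n),
        (∀ u v, pd (f u) (f v) = pd u v) ∧
        f '' Ccode n = Ccode n ∧
        f ν1 = ν2 := by
  intro ν1 h1 ν2 h2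
  obtain ⟨f1, hf1, he1⟩ := to_base hn ν1 h1
  obtain ⟨f2, hf2, he2⟩ := to_base hn ν2 h2
  have hg := good_trans hf1 (good_symm hf2)
  refine ⟨f1.trans f2.symm, hg.1, hg.2, ?_⟩
  rw [Equiv.trans_apply, he1, ← he2, Equiv.symm_apply_apply]
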